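/- For the graph G that is the n-fold Cartesian product of the path graph on two vertices K2 (i.e., the n-dimensional hypercube graph), the Laplacian L(G) has exactly the eigenvalues {0, 2, 4, ..., 2n}, where the eigenvalue 2j occurs with multiplicity binomial(n, j). -/

import Mathlib

/-- The `n`-dimensional hypercube graph: vertices are length-`n` 0-1 vectors,
with an edge exactly between pairs at Hamming distance 1. -/
def hypercube (n : ℕ) : SimpleGraph (Fin n → Bool) where
  Adj x y := hammingDist x y = 1
  symm := ⟨by intro x y h; rwa [hammingDist_comm]⟩
  loopless := ⟨by intro x h; simp [hammingDist_self] at h⟩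

instance (n : ℕ) : DecidableRel (hypercube n).Adj := fun x y =>
  inferInstanceAs (Decidable (hammingDist x y = 1))

open Finset Polynomial Matrix

namespace HypercubeAux

/-- Entry of the Walsh–Hadamard matrix. -/
def ent (a b : Bool) : ℝ := if a && b then -1 else 1

lemma ent_not_left (a b : Bool) : ent (!a) b = (if b then (-1:ℝ) else 1) * ent a b := by
  cases a <;> cases b <;> norm_num [ent]

/-- The Walsh–Hadamard matrix. -/
def Hmat (n : ℕ) : Matrix (Fin n → Bool) (Fin n → Bool) ℝ :=
  Matrix.of fun x S => ∏ i, ent (x i) (S i)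

/-- Hamming weight. -/
def wt {n : ℕ} (S : Fin n → Bool) : ℕ := (Finset.univ.filter (fun i => S i)).card

lemma wt_le {n : ℕ} (S : Fin n → Bool) : wt S ≤ n := by
  simpa [wt] using Finset.card_filter_le Finset.univ (fun i => S i = true)

/-- The diagonal matrix of eigenvalues. -/
def Dmat (n : ℕ) : Matrix (Fin n → Bool) (Fin n → Bool) ℝ :=
  Matrix.diagonal fun S => ((2 * wt S : ℕ) : ℝ)

lemma update_not_injective {n : ℕ} (x : Fin n → Bool) :
    Function.Injective (fun i => Function.update x i (!x i)) := by
  intro i j h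
  by_contra hij
  have h1 := congrFun h i
  simp only [Function.update_apply, if_pos rfl] at h1
  rw [if_neg hij] at h1
  cases x i <;> simp_all

lemma neighborFinset_eq {n : ℕ} (x : Fin n → Bool) :
    (hypercube n).neighborFinset x =
      Finset.image (fun i => Function.update x i (!x i)) Finset.univ := by
  ext y
  simp only [SimpleGraph.mem_neighborFinset, Finset.mem_image, Finset.mem_univ, true_and]
  show hammingDist x y = 1 ↔ _
  constructor
  · intro h
    obtain ⟨i, hi⟩ := Finset.card_eq_one.mp h
    refine ⟨i, ?_⟩
    have hmem : ∀ j, x j ≠ y j ↔ j ∈ ({i} : Finset (Fin n)) := by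
      intro j
      rw [← hi]
      simp [hammingDist]
    funext j
    by_cases hj : j = i
    · subst hj
      have hxy : x j ≠ y j := (hmem j).mpr (Finset.mem_singleton_self j)
      rw [Function.update_self]
      cases hx : x j <;> cases hy : y j <;> simp_all
    · have hxy : x j = y j := by
        by_contra hne
        exact hj (Finset.mem_singleton.mp ((hmem j).mp hne))
      rw [Function.update_of_ne hj]
      exact hxy
  · rintro ⟨i, rfl⟩
    show (Finset.univ.filter (fun j => x j ≠ Function.update x i (!x i) j)).card = 1
    have : (Finset.univ.filter (fun j => x j ≠ Function.update x i (!x i) j)) = {i} := by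
      ext j
      simp only [Finset.mem_filter, Finset.mem_univ, true_and, Finset.mem_singleton]
      by_cases hj : j = i
      · subst hj
        rw [Function.update_self]
        cases x j <;> simp
      · rw [Function.update_of_ne hj]
        simp [hj]
    rw [this, Finset.card_singleton]

lemma degree_eq {n : ℕ} (x : Fin n → Bool) : (hypercube n).degree x = n := by
  rw [SimpleGraph.degree, neighborFinset_eq,
    Finset.card_image_of_injective _ (update_not_injective x), Finset.card_univ,
    Fintype.card_fin]

lemma Hmat_update {n : ℕ} (x S : Fin n → Bool) (i : Fin n) :
    Hmat n (Function.update x i (!x i)) S = (if S i then (-1:ℝ) else 1) * Hmat n x S := by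
  unfold Hmat
  simp only [Matrix.of_apply]
  rw [← Finset.mul_prod_erase Finset.univ
      (fun j => ent (Function.update x i (!x i) j) (S j)) (Finset.mem_univ i),
    ← Finset.mul_prod_erase Finset.univ (fun j => ent (x j) (S j)) (Finset.mem_univ i)]
  rw [Function.update_self, ent_not_left, mul_assoc]
  congr 1
  congr 1
  apply Finset.prod_congr rfl
  intro j hj
  rw [Function.update_of_ne (Finset.ne_of_mem_erase hj)]

lemma sum_sign {n : ℕ} (S : Fin n → Bool) :
    ∑ i : Fin n, (if S i then (-1:ℝ) else 1) = (n : ℝ) - 2 * (wt S : ℝ) := by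
  have h : ∀ i : Fin n, (if S i then (-1:ℝ) else 1)
      = 1 - 2 * (if S i then (1:ℝ) else 0) := by
    intro i; by_cases h : S i <;> simp [h] <;> norm_num
  simp_rw [h]
  rw [Finset.sum_sub_distrib, Finset.sum_const, ← Finset.mul_sum, Finset.sum_boole]
  simp [wt]

lemma L_mul_H (n : ℕ) : (hypercube n).lapMatrix ℝ * Hmat n = Hmat n * Dmat n := by
  ext x S
  rw [Dmat, Matrix.mul_diagonal, Matrix.mul_apply]
  have h := SimpleGraph.lapMatrix_mulVec_apply (R := ℝ) (hypercube n) x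
    (fun y => Hmat n y S)
  simp only [Matrix.mulVec, dotProduct] at h
  rw [h, degree_eq, neighborFinset_eq,
    Finset.sum_image (fun i _ j _ hij => update_not_injective x hij)]
  simp_rw [Hmat_update]
  rw [← Finset.sum_mul, sum_sign]
  push_cast
  ring

lemma ent_factor (a c : Bool) : ∑ b : Bool, ent a b * ent b c = if a = c then 2 else 0 := by
  cases a <;> cases c <;> norm_num [ent, Fintype.sum_bool]

lemma H_mul_H (n : ℕ) : Hmat n * Hmat n = ((2:ℝ)^n) • 1 := by
  ext x z
  rw [Matrix.mul_apply]
  have hterm : ∀ S : Fin n → Bool,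
      Hmat n x S * Hmat n S z = ∏ i, (ent (x i) (S i) * ent (S i) (z i)) := by
    intro S
    simp only [Hmat, Matrix.of_apply]
    rw [← Finset.prod_mul_distrib]
  simp_rw [hterm]
  rw [← Fintype.piFinset_univ, ← Finset.prod_univ_sum (fun _ : Fin n => (Finset.univ : Finset Bool)) (fun i b => ent (x i) b * ent b (z i))]
  simp_rw [ent_factor]
  by_cases h : x = z
  · subst h
    simp [Matrix.one_apply, Finset.prod_ite_eq]
  · obtain ⟨i, hi⟩ := Function.ne_iff.mp h
    rw [Finset.prod_eq_zero (Finset.mem_univ i) (by simp [hi])]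
    simp [Matrix.one_apply, h]

lemma det_H_ne_zero (n : ℕ) : (Hmat n).det ≠ 0 := by
  intro h
  have h2 := congrArg Matrix.det (H_mul_H n)
  rw [Matrix.det_mul, h, mul_zero, Matrix.det_smul, Matrix.det_one, mul_one] at h2
  exact (pow_ne_zero _ (by positivity : (2:ℝ)^n ≠ 0)) h2.symm

lemma charpoly_eq (n : ℕ) :
    ((hypercube n).lapMatrix ℝ).charpoly = (Dmat n).charpoly := by
  set K := (C : ℝ →+* ℝ[X]).mapMatrix (Hmat n) with hK
  have hdet : K.det ≠ 0 := by
    rw [hK, ← RingHom.map_det]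
    simpa using det_H_ne_zero n
  have hcomm : charmatrix ((hypercube n).lapMatrix ℝ) * K = K * charmatrix (Dmat n) := by
    unfold charmatrix
    rw [sub_mul, mul_sub]
    refine congrArg₂ (· - ·) ?_ ?_
    · exact (Matrix.scalar_commute (X : ℝ[X]) (fun r => Commute.all X r) K).eq
    · rw [hK, ← RingHom.map_mul, ← RingHom.map_mul, L_mul_H]
  have hdets := congrArg Matrix.det hcomm
  rw [Matrix.det_mul, Matrix.det_mul, mul_comm] at hdets
  exact mul_left_cancel₀ hdet hdets

lemma charpoly_D (n : ℕ) :
    (Dmat n).charpoly = ∏ S : Fin n → Bool, (X - C ((2 * wt S : ℕ) : ℝ)) := by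
  rw [Matrix.charpoly]
  have h : charmatrix (Dmat n)
      = Matrix.diagonal fun S : Fin n → Bool => (X - C ((2 * wt S : ℕ) : ℝ)) := by
    ext S T
    by_cases h : S = T
    · subst h
      rw [charmatrix_apply_eq, Matrix.diagonal_apply_eq]
      simp [Dmat]
    · rw [charmatrix_apply_ne _ _ _ h, Matrix.diagonal_apply_ne _ h]
      simp [Dmat, Matrix.diagonal_apply_ne _ h]
  rw [h, Matrix.det_diagonal]

lemma card_wt_eq (n j : ℕ) :
    (Finset.univ.filter (fun S : Fin n → Bool => wt S = j)).card = n.choose j := by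
  have hb : (Finset.univ.filter (fun S : Fin n → Bool => wt S = j)).card
      = (Finset.powersetCard j (Finset.univ : Finset (Fin n))).card := by
    apply Finset.card_bij (fun S _ => Finset.univ.filter (fun i => S i))
    · intro S hS
      simp only [Finset.mem_filter, Finset.mem_univ, true_and] at hS
      rw [Finset.mem_powersetCard]
      exact ⟨Finset.subset_univ _, hS⟩
    · intro S hS T hT hST
      funext i
      have := Finset.ext_iff.mp hST i
      simp only [Finset.mem_filter, Finset.mem_univ, true_and] at this
      cases hSi : S i <;> cases hTi : T i <;> simp_all
    · intro t ht
      rw [Finset.mem_powersetCard] at ht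
      refine ⟨fun i => decide (i ∈ t), ?_, ?_⟩
      · simp only [Finset.mem_filter, Finset.mem_univ, true_and]
        rw [← ht.2]
        simp [wt]
      · ext i
        simp
  rw [hb, Finset.card_powersetCard, Finset.card_univ, Fintype.card_fin]

end HypercubeAux

open HypercubeAux in
/-- The Laplacian of the `n`-dimensional hypercube graph has exactly the eigenvalues
`0, 2, 4, …, 2n`, where `2j` occurs with multiplicity `n.choose j`: its characteristic
polynomial is `∏_{j=0}^{n} (X - 2j)^(n choose j)`. -/
theorem hypercube_lapMatrix_charpoly (n : ℕ) :
    ((hypercube n).lapMatrix ℝ).charpoly =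
      ∏ j ∈ Finset.range (n + 1),
        (Polynomial.X - Polynomial.C ((2 * j : ℕ) : ℝ)) ^ n.choose j := by
  rw [charpoly_eq, charpoly_D]
  rw [← Finset.prod_fiberwise_of_maps_to
    (g := wt) (t := Finset.range (n + 1))
    (fun S _ => Finset.mem_range.mpr (Nat.lt_succ_of_le (wt_le S)))
    (fun S => X - C ((2 * wt S : ℕ) : ℝ))]
  apply Finset.prod_congr rfl
  intro j hj
  rw [Finset.prod_congr rfl (fun S hS => by
      rw [(Finset.mem_filter.mp hS).2]),
    Finset.prod_const, card_wt_eq]
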